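/- Let f be a strongly hyperbolic function and b > 0. Then lim_{x→+∞} f'(x)/f'(x+b) = 1. -/

import Mathlib

open Filter Set Real

/-- A strongly hyperbolic function `f : (0,∞) → (0,∞)`. -/
def StronglyHyperbolic (f : ℝ → ℝ) : Prop :=
  (∀ x ∈ Set.Ioi (0:ℝ), 0 < f x) ∧
  Filter.Tendsto f (nhdsWithin 0 (Set.Ioi 0)) Filter.atTop ∧
  Filter.Tendsto f Filter.atTop (nhds 0) ∧
  StrictConvexOn ℝ (Set.Ioi 0) f ∧
  (∀ b : ℝ, Filter.Tendsto (fun x => f (x + b) / f x) Filter.atTop (nhds 1)) ∧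
  (∀ x ∈ Set.Ioi (0:ℝ), DifferentiableAt ℝ f x) ∧
  StrictConvexOn ℝ (Set.Ioi 0) (fun x => Real.log |deriv f x|)

theorem stmt1 (f : ℝ → ℝ) (hf : StronglyHyperbolic f) (b : ℝ) (hb : 0 < b) :
    Filter.Tendsto (fun x => deriv f x / deriv f (x + b)) Filter.atTop (nhds 1) := by
  obtain ⟨hpos, _h0, hlim0, hconv, hratio, hdiff, hlogconv⟩ := hf
  set g : ℝ → ℝ := fun x => Real.log |deriv f x| with hg
  -- Step 1: deriv f < 0 on (0,∞)
  have hderiv_neg : ∀ x ∈ Set.Ioi (0:ℝ), deriv f x < 0 := by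
    intro x hx
    by_contra hge
    push_neg at hge
    have hmono : ∀ y, x < y → f x ≤ f y := by
      intro y hxy
      have hy : y ∈ Set.Ioi (0:ℝ) := lt_trans hx hxy
      have := hconv.convexOn.deriv_le_slope hx hy hxy (hdiff x hx)
      rw [slope_def_field] at this
      have h1 : 0 ≤ (f y - f x) / (y - x) := le_trans hge this
      have h2 : (0:ℝ) * (y - x) ≤ f y - f x := (le_div_iff₀ (sub_pos.mpr hxy)).mp h1
      linarith
    have : ∀ᶠ y in Filter.atTop, f y < f x := by
      have := hlim0.eventually (eventually_lt_nhds (hpos x hx))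
      simpa using this
    obtain ⟨y, hy1, hy2⟩ := (this.and (eventually_gt_atTop x)).exists
    exact absurd (hmono y hy2) (not_le.mpr hy1)
  have hdpos : ∀ x ∈ Set.Ioi (0:ℝ), 0 < -deriv f x := fun x hx => by
    linarith [hderiv_neg x hx]
  have habs : ∀ x ∈ Set.Ioi (0:ℝ), |deriv f x| = -deriv f x := fun x hx =>
    abs_of_neg (hderiv_neg x hx)
  have hexpg : ∀ x ∈ Set.Ioi (0:ℝ), Real.exp (g x) = -deriv f x := by
    intro x hx
    rw [hg]
    simp only
    rw [habs x hx, Real.exp_log (hdpos x hx)]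
  -- f' monotone, so g antitone
  have hdmono : MonotoneOn (deriv f) (Set.Ioi (0:ℝ)) :=
    hconv.convexOn.monotoneOn_deriv hdiff
  have hganti : ∀ x ∈ Set.Ioi (0:ℝ), ∀ y ∈ Set.Ioi (0:ℝ), x ≤ y → g y ≤ g x := by
    intro x hx y hy hxy
    rw [hg]
    simp only
    rw [habs x hx, habs y hy]
    exact Real.log_le_log (hdpos y hy) (by linarith [hdmono hx hy hxy])
  -- tangent line inequalities
  have htan1 : ∀ x ∈ Set.Ioi (0:ℝ), f x - f (x + b) ≤ b * (-deriv f x) := by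
    intro x hx
    have hxb : x + b ∈ Set.Ioi (0:ℝ) := by simp only [Set.mem_Ioi] at *; linarith
    have := hconv.convexOn.deriv_le_slope hx hxb (by linarith) (hdiff x hx)
    rw [slope_def_field] at this
    have hb' : (0:ℝ) < x + b - x := by linarith
    rw [le_div_iff₀ hb'] at this
    nlinarith
  have htan2 : ∀ x ∈ Set.Ioi (0:ℝ), b * (-deriv f (x + b)) ≤ f x - f (x + b) := by
    intro x hx
    have hxb : x + b ∈ Set.Ioi (0:ℝ) := by simp only [Set.mem_Ioi] at *; linarith
    have := hconv.convexOn.slope_le_deriv hx hxb (by linarith) (hdiff _ hxb)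
    rw [slope_def_field] at this
    have hb' : (0:ℝ) < x + b - x := by linarith
    rw [div_le_iff₀ hb'] at this
    nlinarith
  -- h := g x - g (x+b) is antitone on Ioi 0
  set h : ℝ → ℝ := fun x => g x - g (x + b) with hhdef
  have hhnonneg : ∀ x ∈ Set.Ioi (0:ℝ), 0 ≤ h x := by
    intro x hx
    have hxb : x + b ∈ Set.Ioi (0:ℝ) := by simp only [Set.mem_Ioi] at *; linarith
    have := hganti x hx (x + b) hxb (by linarith)
    simp only [hhdef]
    linarith
  have hhanti : ∀ x ∈ Set.Ioi (0:ℝ), ∀ y ∈ Set.Ioi (0:ℝ), x ≤ y → h y ≤ h x := by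
    intro x hx y hy hxy
    rcases eq_or_lt_of_le hxy with rfl | hlt
    · exact le_rfl
    have hxb : x + b ∈ Set.Ioi (0:ℝ) := by simp only [Set.mem_Ioi] at *; linarith
    have hyb : y + b ∈ Set.Ioi (0:ℝ) := by simp only [Set.mem_Ioi] at *; linarith
    have s1 := hlogconv.convexOn.secant_mono hx hxb hyb
      (by intro hc; linarith) (by intro hc; linarith)
      (by linarith)
    have s2 := hlogconv.convexOn.secant_mono hyb hx hy
      (by intro hc; linarith) (by intro hc; linarith)
      hxy
    -- s1 : (g (x+b) - g x)/((x+b)-x) ≤ (g (y+b) - g x)/((y+b)-x)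
    -- s2 : (g x - g (y+b))/(x-(y+b)) ≤ (g y - g (y+b))/(y-(y+b))
    have e1 : ((x:ℝ) + b) - x = b := by ring
    have hd1 : (0:ℝ) < (y + b) - x := by linarith
    have e2 : (g x - g (y + b)) / (x - (y + b)) = (g (y + b) - g x) / ((y + b) - x) := by
      rw [← neg_div_neg_eq]; ring_nf
    have e3 : (g y - g (y + b)) / (y - (y + b)) = (g (y + b) - g y) / b := by
      rw [← neg_div_neg_eq]; ring_nf
    rw [e1] at s1
    rw [e2, e3] at s2
    have chain : (g (x + b) - g x) / b ≤ (g (y + b) - g y) / b := le_trans s1 s2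
    have := (div_le_div_iff_of_pos_right hb).mp chain
    simp only [hhdef]
    linarith
  -- H : global antitone extension, L = its limit
  set H : ℝ → ℝ := fun x => h (max x 1) with hHdef
  have hmax : ∀ x : ℝ, max x 1 ∈ Set.Ioi (0:ℝ) := fun x => by
    simp only [Set.mem_Ioi]; positivity
  have hHanti : Antitone H := by
    intro x y hxy
    exact hhanti _ (hmax x) _ (hmax y) (max_le_max hxy le_rfl)
  have hHbdd : BddBelow (Set.range H) := by
    refine ⟨0, ?_⟩
    rintro _ ⟨x, rfl⟩
    exact hhnonneg _ (hmax x)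
  set L : ℝ := ⨅ x, H x with hLdef
  have hHtendsto : Filter.Tendsto H Filter.atTop (nhds L) :=
    tendsto_atTop_ciInf hHanti hHbdd
  have hL0 : 0 ≤ L := le_ciInf fun x => hhnonneg _ (hmax x)
  have hLle : ∀ x : ℝ, L ≤ H x := fun x => ciInf_le hHbdd x
  have hLh : ∀ x : ℝ, 1 ≤ x → L ≤ h x := by
    intro x hx
    have h1 : H x = h x := by
      change h (max x 1) = h x
      rw [max_eq_left hx]
    rw [← h1]
    exact hLle x
  -- L = 0
  have hLzero : L = 0 := by
    by_contra hLne
    have hLpos : 0 < L := lt_of_le_of_ne hL0 (Ne.symm hLne)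
    set r : ℝ := Real.exp (-L) with hrdef
    have hr0 : 0 < r := Real.exp_pos _
    have hr1 : r < 1 := Real.exp_lt_one_iff.mpr (by linarith)
    -- decay of -f'
    have hdecay : ∀ z : ℝ, 1 ≤ z → -deriv f (z + b) ≤ r * (-deriv f z) := by
      intro z hz
      have hz0 : z ∈ Set.Ioi (0:ℝ) := by simp only [Set.mem_Ioi]; linarith
      have hzb : z + b ∈ Set.Ioi (0:ℝ) := by simp only [Set.mem_Ioi]; linarith
      have hL' := hLh z hz
      simp only [hhdef] at hL'
      have : g (z + b) ≤ g z + (-L) := by linarith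
      calc -deriv f (z + b) = Real.exp (g (z + b)) := (hexpg _ hzb).symm
        _ ≤ Real.exp (g z + (-L)) := Real.exp_le_exp.mpr this
        _ = Real.exp (g z) * r := by rw [Real.exp_add, hrdef]
        _ = r * (-deriv f z) := by rw [hexpg _ hz0]; ring
    -- contradiction with f(x+b)/f(x) → 1
    set M : ℝ := h 1 with hMdef
    set ε : ℝ := Real.exp (-M) * (1 - r) with hεdef
    have hε0 : 0 < ε := by
      rw [hεdef]
      exact mul_pos (Real.exp_pos _) (by linarith)
    have key : ∀ x : ℝ, 1 ≤ x → f (x + b) ≤ (1 - ε) * f x := by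
      intro x hx
      have hx0 : x ∈ Set.Ioi (0:ℝ) := by simp only [Set.mem_Ioi]; linarith
      have hxb : x + b ∈ Set.Ioi (0:ℝ) := by simp only [Set.mem_Ioi]; linarith
      -- Q : decay along arithmetic progression
      have hQ : ∀ n : ℕ, -deriv f (x + n * b) ≤ r ^ n * (-deriv f x) := by
        intro n
        induction n with
        | zero => simp
        | succ n ih =>
          have hxn : (1:ℝ) ≤ x + n * b := by
            have : (0:ℝ) ≤ (n:ℝ) * b := mul_nonneg (Nat.cast_nonneg n) hb.le
            linarith
          have := hdecay (x + n * b) hxn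
          have e : x + n * b + b = x + (n + 1 : ℕ) * b := by push_cast; ring
          rw [e] at this
          calc -deriv f (x + (n + 1 : ℕ) * b) ≤ r * (-deriv f (x + n * b)) := this
            _ ≤ r * (r ^ n * (-deriv f x)) := by
                exact mul_le_mul_of_nonneg_left ih (le_of_lt hr0)
            _ = r ^ (n + 1 : ℕ) * (-deriv f x) := by ring
      set C : ℝ := b * (-deriv f x) / (1 - r) with hCdef
      have hC0 : 0 ≤ C := by
        rw [hCdef]
        exact div_nonneg (mul_nonneg hb.le (hdpos x hx0).le) (by linarith)
      have hP : ∀ n : ℕ, f x - f (x + n * b) ≤ C * (1 - r ^ n) := by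
        intro n
        induction n with
        | zero => simp
        | succ n ih =>
          have hxn0 : x + n * b ∈ Set.Ioi (0:ℝ) := by
            simp only [Set.mem_Ioi]
            have : (0:ℝ) ≤ n * b := by positivity
            linarith
          have ht := htan1 (x + n * b) hxn0
          have hQn := hQ n
          have e : x + n * b + b = x + (n + 1 : ℕ) * b := by push_cast; ring
          rw [e] at ht
          have hCe : C * (1 - r) = b * (-deriv f x) := by
            have hr' : (1:ℝ) - r ≠ 0 := by linarith
            rw [hCdef, div_mul_cancel₀ _ hr']
          have step : f (x + n * b) - f (x + (n + 1 : ℕ) * b) ≤ C * (1 - r) * r ^ n := by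
            rw [hCe]
            calc f (x + n * b) - f (x + (n + 1 : ℕ) * b) ≤ b * (-deriv f (x + n * b)) := ht
              _ ≤ b * (r ^ n * (-deriv f x)) :=
                  mul_le_mul_of_nonneg_left hQn (le_of_lt hb)
              _ = b * (-deriv f x) * r ^ n := by ring
          have : f x - f (x + (n + 1 : ℕ) * b) ≤ C * (1 - r ^ n) + C * (1 - r) * r ^ n := by
            linarith
          calc f x - f (x + (n + 1 : ℕ) * b) ≤ C * (1 - r ^ n) + C * (1 - r) * r ^ n := this
            _ = C * (1 - r ^ (n + 1 : ℕ)) := by ring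
      -- pass to the limit: f x ≤ C
      have hfxC : f x ≤ C := by
        have hn : Filter.Tendsto (fun n : ℕ => x + n * b) Filter.atTop Filter.atTop := by
          apply Filter.tendsto_atTop_add_const_left
          exact Tendsto.atTop_mul_const hb tendsto_natCast_atTop_atTop
        have hfn : Filter.Tendsto (fun n : ℕ => f x - f (x + n * b)) Filter.atTop
            (nhds (f x - 0)) := tendsto_const_nhds.sub (hlim0.comp hn)
        rw [sub_zero] at hfn
        refine le_of_tendsto hfn ?_
        filter_upwards with n
        have := hP n
        have hrn : 0 ≤ r ^ n := by positivity
        nlinarith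
      -- lower bound on the drop
      have hdrop : ε * f x ≤ f x - f (x + b) := by
        have ht2 := htan2 x hx0
        have hhle : h x ≤ M := by
          rw [hMdef]
          exact hhanti 1 (Set.mem_Ioi.mpr one_pos) x hx0 hx
        have hlow : Real.exp (-M) * (-deriv f x) ≤ -deriv f (x + b) := by
          have hgx : g (x + b) = g x - h x := by simp only [hhdef]; ring
          calc Real.exp (-M) * (-deriv f x) = Real.exp (-M) * Real.exp (g x) := by
                rw [hexpg _ hx0]
            _ = Real.exp (g x - M) := by
                rw [← Real.exp_add, show -M + g x = g x - M from by ring]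
            _ ≤ Real.exp (g x - h x) := Real.exp_le_exp.mpr (by linarith)
            _ = -deriv f (x + b) := by rw [← hgx, hexpg _ hxb]
        have hbfx : (1 - r) * f x ≤ b * (-deriv f x) := by
          have hCe2 : C * (1 - r) = b * (-deriv f x) := by
            have hr' : (1:ℝ) - r ≠ 0 := by linarith
            rw [hCdef, div_mul_cancel₀ _ hr']
          nlinarith
        calc ε * f x = Real.exp (-M) * ((1 - r) * f x) := by rw [hεdef]; ring
          _ ≤ Real.exp (-M) * (b * (-deriv f x)) :=
              mul_le_mul_of_nonneg_left hbfx (le_of_lt (Real.exp_pos _))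
          _ = b * (Real.exp (-M) * (-deriv f x)) := by ring
          _ ≤ b * (-deriv f (x + b)) :=
              mul_le_mul_of_nonneg_left hlow (le_of_lt hb)
          _ ≤ f x - f (x + b) := ht2
      linarith
    -- contradiction
    have hev : ∀ᶠ x in Filter.atTop, 1 - ε < f (x + b) / f x :=
      (hratio b).eventually (eventually_gt_nhds (by linarith))
    obtain ⟨x, hx1, hx2⟩ := (hev.and (eventually_ge_atTop (1:ℝ))).exists
    have hfx : 0 < f x := hpos x (by simp only [Set.mem_Ioi]; linarith)
    have := key x hx2
    rw [lt_div_iff₀ hfx] at hx1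
    linarith
  -- conclude
  have hhtendsto : Filter.Tendsto h Filter.atTop (nhds 0) := by
    rw [← hLzero]
    refine hHtendsto.congr' ?_
    filter_upwards [eventually_ge_atTop (1:ℝ)] with x hx
    change h (max x 1) = h x
    rw [max_eq_left hx]
  have hexp : Filter.Tendsto (fun x => Real.exp (h x)) Filter.atTop (nhds 1) := by
    have := (Real.continuous_exp.tendsto 0).comp hhtendsto
    simpa [Function.comp_def] using this
  refine hexp.congr' ?_
  filter_upwards [eventually_ge_atTop (1:ℝ)] with x hx
  have hx0 : x ∈ Set.Ioi (0:ℝ) := by simp only [Set.mem_Ioi]; linarith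
  have hxb : x + b ∈ Set.Ioi (0:ℝ) := by simp only [Set.mem_Ioi]; linarith
  have : Real.exp (h x) = (-deriv f x) / (-deriv f (x + b)) := by
    simp only [hhdef]
    rw [Real.exp_sub, hexpg _ hx0, hexpg _ hxb]
  rw [this, neg_div_neg_eq]
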